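/- Let E be the exterior algebra on n generators over a field K, M a graded E-module, E' = E ⊗_K Λ⟨x⟩ the exterior algebra on one more generator, and M' = M ⊗_E E'. Then a linear form ℓ' = ℓ + αx of E' (with ℓ ∈ E_1 and α ∈ K) is regular on M' if and only if α ≠ 0 or ℓ is regular on M. Consequently the singular variety of M' in E'_1 equals the singular variety of M in E_1. -/

import Mathlib

open ExteriorAlgebra

/-- Let `E = Λ(V)` and let `M` be a graded `E`-module, with grading recorded by its
parity operator `σ` (which is `(-1)^deg` on homogeneous elements, so `σ² = id` and
`σ(ℓ•m) = -ℓ•σ(m)` for linear forms `ℓ`).  Let `E' = E ⊗ Λ⟨x⟩` and `M' = M ⊗_E E'`,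
so that `M' = M ⊕ Mx` with a degree-one element `ℓ' = ℓ + αx` of `E'` (where
`ℓ = ι v ∈ E₁` and `α ∈ K`) acting by `ℓ'·(a + bx) = ℓa + (ℓb + α σ(a))x`.
Then `ℓ'` is regular on `M'` if and only if `α ≠ 0` or `ℓ` is regular on `M`;
consequently the singular variety of `M'` in `E'₁` equals that of `M` in `E₁`. -/
theorem stmt6 (K : Type*) [Field K] (V : Type*) [AddCommGroup V] [Module K V]
    (M : Type*) [AddCommGroup M] [Module K M] [Module (ExteriorAlgebra K V) M]
    [IsScalarTower K (ExteriorAlgebra K V) M] [SMulCommClass K (ExteriorAlgebra K V) M]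
    (σ : M →ₗ[K] M)
    (hσσ : ∀ m : M, σ (σ m) = m)
    (hσι : ∀ (v : V) (m : M),
      σ ((ExteriorAlgebra.ι K v : ExteriorAlgebra K V) • m) =
        -((ExteriorAlgebra.ι K v : ExteriorAlgebra K V) • σ m))
    (v : V) (α : K) :
    -- `ℓ' = ι v + α x` is regular on `M' = M ⊕ Mx` ...
    ({p : M × M |
        ((ExteriorAlgebra.ι K v : ExteriorAlgebra K V) • p.1,
          (ExteriorAlgebra.ι K v : ExteriorAlgebra K V) • p.2 + α • σ p.1) = 0} =
      Set.range fun p : M × M =>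
        ((ExteriorAlgebra.ι K v : ExteriorAlgebra K V) • p.1,
          (ExteriorAlgebra.ι K v : ExteriorAlgebra K V) • p.2 + α • σ p.1))
    ↔
    -- ... iff `α ≠ 0` or `ℓ = ι v` is regular on `M`.
    (α ≠ 0 ∨
      ({m : M | (ExteriorAlgebra.ι K v : ExteriorAlgebra K V) • m = 0} =
        Set.range fun m : M => (ExteriorAlgebra.ι K v : ExteriorAlgebra K V) • m)) := by

  set ℓ : ExteriorAlgebra K V := ExteriorAlgebra.ι K v with hℓdef
  have hLL : ∀ m : M, ℓ • ℓ • m = 0 := fun m => by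
    rw [smul_smul, hℓdef, ι_sq_zero, zero_smul]
  have hσℓ : ∀ m : M, ℓ • σ m = -σ (ℓ • m) := by
    intro m
    rw [hσι v m]
    simp
    rfl
  have hT2 : ∀ p : M × M,
      ((ℓ • (ℓ • p.1), ℓ • (ℓ • p.2 + α • σ p.1) + α • σ (ℓ • p.1)) : M × M) = 0 := by
    intro p
    have h1 : ℓ • (ℓ • p.2 + α • σ p.1) = α • (ℓ • σ p.1) := by
      rw [smul_add, hLL, smul_comm, zero_add]
    rw [hLL, h1, hσℓ]
    simp
  constructor
  · intro h
    by_cases hα : α = 0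
    · right
      subst hα
      ext m
      constructor
      · intro hm
        have hmem : ((m, (0:M)) : M × M) ∈ {p : M × M |
            ((ℓ • p.1, ℓ • p.2 + (0:K) • σ p.1) : M × M) = 0} := by
          simp only [Set.mem_setOf_eq, zero_smul, add_zero, smul_zero]
          exact Prod.ext hm rfl
        rw [h] at hmem
        obtain ⟨⟨p, q⟩, hpq⟩ := hmem
        exact ⟨p, congrArg Prod.fst hpq⟩
      · rintro ⟨p, rfl⟩
        exact hLL p
    · exact Or.inl hα
  · intro h
    ext ⟨a, b⟩
    constructor
    · intro hab
      have h1 : ℓ • a = 0 := congrArg Prod.fst hab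
      have h2 : ℓ • b + α • σ a = 0 := congrArg Prod.snd hab
      rcases h with hα | hreg
      · refine ⟨(α⁻¹ • σ b, 0), ?_⟩
        simp only [Prod.mk.injEq]
        have hLb : ℓ • b = -(α • σ a) := by
          rw [eq_neg_iff_add_eq_zero]; exact h2
        have hLσb : ℓ • σ b = α • a := by
          rw [hσℓ, hLb]
          simp only [map_neg, map_smul, hσσ, neg_neg]
        constructor
        · show ℓ • (α⁻¹ • σ b) = a
          rw [smul_comm, hLσb, smul_smul, inv_mul_cancel₀ hα, one_smul]
        · show ℓ • (0:M) + α • σ (α⁻¹ • σ b) = b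
          rw [smul_zero, zero_add, map_smul, hσσ, smul_smul, mul_inv_cancel₀ hα, one_smul]
      · -- ℓ regular on M
        have ha : a ∈ {m : M | ℓ • m = 0} := h1
        rw [hreg] at ha
        obtain ⟨p, hp⟩ := ha
        have hp' : ℓ • p = a := hp
        have hb : (b - α • σ p) ∈ {m : M | ℓ • m = 0} := by
          show ℓ • (b - α • σ p) = 0
          rw [smul_sub, smul_comm, hσℓ, hp', smul_neg, sub_neg_eq_add]
          exact h2
        rw [hreg] at hb
        obtain ⟨q, hq⟩ := hb
        have hq' : ℓ • q = b - α • σ p := hq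
        refine ⟨(p, q), ?_⟩
        simp only [Prod.mk.injEq]
        constructor
        · exact hp'
        · show ℓ • q + α • σ p = b
          rw [hq']; abel
    · rintro ⟨⟨p, q⟩, hpq⟩
      rw [← hpq]
      exact hT2 (p, q)
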